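/- Let F be a field, let r, s ∈ F with s ≠ 0 and s ≠ 1, set c = s(r−1) and b = c·r, and let W be the Tate normal form E(b,c): y² + (1−c)xy − by = x³ − bx². If the discriminant Δ of W is nonzero, then for P = (0,0) one has 5•P = (rs(s−1), rs²(r−s)) and 6•P = ( s(r−1)(r−s)/(s−1)² , s²(r−1)²(rs − 2r + 1)/(s−1)³ ). -/

import Mathlib

open WeierstrassCurve.Affine in
lemma tate_aux_some_eq_some {F : Type*} [Field F] {W : WeierstrassCurve.Affine F}
    {x₁ y₁ x₂ y₂ : F} (h₁ : W.Nonsingular x₁ y₁) (h₂ : W.Nonsingular x₂ y₂)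
    (hx : x₁ = x₂) (hy : y₁ = y₂) : Point.some _ _ h₁ = Point.some _ _ h₂ := by
  subst hx hy; rfl

set_option maxHeartbeats 4000000 in
open Classical in
/-- For a field `F`, `r, s ∈ F` with `s ≠ 0` and `s ≠ 1`, set `c = s(r-1)` and
`b = c * r`, and let `W` be the Tate normal form `E(b,c) : y² + (1-c)xy - by = x³ - bx²`. If the
discriminant `Δ` of `W` is nonzero, then for `P = (0,0)` one has
`5 • P = (rs(s-1), rs²(r-s))` and `6 • P = (s(r-1)(r-s)/(s-1)², s²(r-1)²(rs-2r+1)/(s-1)³)`. -/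
theorem tate_normal_form_five_six_smul (F : Type*) [Field F] (r s : F)
    (hs0 : s ≠ 0) (hs1 : s ≠ 1)
    (c : F) (hc : c = s * (r - 1)) (b : F) (hb : b = c * r)
    (W : WeierstrassCurve.Affine F)
    (hW : W = { a₁ := 1 - c, a₂ := -b, a₃ := -b, a₄ := 0, a₆ := 0 })
    (hΔ : W.Δ ≠ 0) :
    ∃ (h : W.Nonsingular 0 0)
      (h5 : W.Nonsingular (r * s * (s - 1)) (r * s ^ 2 * (r - s)))
      (h6 : W.Nonsingular (s * (r - 1) * (r - s) / (s - 1) ^ 2)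
        (s ^ 2 * (r - 1) ^ 2 * (r * s - 2 * r + 1) / (s - 1) ^ 3)),
      (5 : ℤ) • (WeierstrassCurve.Affine.Point.some _ _ h) =
        WeierstrassCurve.Affine.Point.some _ _ h5 ∧
      (6 : ℤ) • (WeierstrassCurve.Affine.Point.some _ _ h) =
        WeierstrassCurve.Affine.Point.some _ _ h6 := by
  open WeierstrassCurve.Affine WeierstrassCurve.Affine.Point in
  subst hc hb
  have ha1 : W.a₁ = 1 - s * (r - 1) := by rw [hW]
  have ha2 : W.a₂ = -(s * (r - 1) * r) := by rw [hW]
  have ha3 : W.a₃ = -(s * (r - 1) * r) := by rw [hW]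
  have ha4 : W.a₄ = 0 := by rw [hW]
  have ha6 : W.a₆ = 0 := by rw [hW]
  have hs1' : s - 1 ≠ 0 := sub_ne_zero.mpr hs1
  have hr0 : r ≠ 0 := by
    rintro rfl
    apply hΔ
    simp only [WeierstrassCurve.Δ, WeierstrassCurve.b₂, WeierstrassCurve.b₄,
      WeierstrassCurve.b₆, WeierstrassCurve.b₈, ha1, ha2, ha3, ha4, ha6]
    ring
  have hr1 : r - 1 ≠ 0 := by
    rw [sub_ne_zero]
    rintro rfl
    apply hΔ
    simp only [WeierstrassCurve.Δ, WeierstrassCurve.b₂, WeierstrassCurve.b₄,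
      WeierstrassCurve.b₆, WeierstrassCurve.b₈, ha1, ha2, ha3, ha4, ha6]
    ring
  have hb0 : s * (r - 1) * r ≠ 0 := mul_ne_zero (mul_ne_zero hs0 hr1) hr0
  have hc0 : s * (r - 1) ≠ 0 := mul_ne_zero hs0 hr1
  have hx4 : r * (r - 1) ≠ (0 : F) := mul_ne_zero hr0 hr1
  have hx5 : r * s * (s - 1) ≠ (0 : F) := mul_ne_zero (mul_ne_zero hr0 hs0) hs1'
  -- equations of the six points
  have e1 : W.Equation 0 0 := by
    rw [equation_iff, ha1, ha2, ha3, ha4, ha6]; ring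
  have e2 : W.Equation (s * (r - 1) * r) (s * (r - 1) * r * (s * (r - 1))) := by
    rw [equation_iff, ha1, ha2, ha3, ha4, ha6]; ring
  have e3 : W.Equation (s * (r - 1)) (s * (r - 1) * r - s * (r - 1)) := by
    rw [equation_iff, ha1, ha2, ha3, ha4, ha6]; ring
  have e4 : W.Equation (r * (r - 1)) (r ^ 2 * (r - 1) * (s - 1)) := by
    rw [equation_iff, ha1, ha2, ha3, ha4, ha6]; ring
  have e5 : W.Equation (r * s * (s - 1)) (r * s ^ 2 * (r - s)) := by
    rw [equation_iff, ha1, ha2, ha3, ha4, ha6]; ring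
  have e6 : W.Equation (s * (r - 1) * (r - s) / (s - 1) ^ 2)
      (s ^ 2 * (r - 1) ^ 2 * (r * s - 2 * r + 1) / (s - 1) ^ 3) := by
    rw [equation_iff, ha1, ha2, ha3, ha4, ha6]; field_simp [hs1']; ring
  have h1 := (W.equation_iff_nonsingular_of_Δ_ne_zero hΔ).mp e1
  have h2 := (W.equation_iff_nonsingular_of_Δ_ne_zero hΔ).mp e2
  have h3 := (W.equation_iff_nonsingular_of_Δ_ne_zero hΔ).mp e3
  have h4 := (W.equation_iff_nonsingular_of_Δ_ne_zero hΔ).mp e4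
  have h5 := (W.equation_iff_nonsingular_of_Δ_ne_zero hΔ).mp e5
  have h6 := (W.equation_iff_nonsingular_of_Δ_ne_zero hΔ).mp e6
  -- the additions
  have step2 : some _ _ h1 + some _ _ h1 = some _ _ h2 := by
    have hy : (0 : F) ≠ W.negY 0 0 := by
      rw [negY, ha1, ha3]; intro hh
      apply hb0; linear_combination -hh
    rw [add_of_Y_ne hy]
    refine tate_aux_some_eq_some _ _ ?_ ?_
    · rw [addX, slope_of_Y_ne rfl hy, negY, ha1, ha2, ha3, ha4]
      field_simp [hb0, hc0, hx4, hx5, hs1', hr0, hr1, hs0, sub_ne_zero]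
      try ring
    · rw [addY, negAddY, addX, negY, slope_of_Y_ne rfl hy, negY, ha1, ha2, ha3, ha4]
      field_simp [hb0, hc0, hx4, hx5, hs1', hr0, hr1, hs0, sub_ne_zero]
      try ring
  have step3 : some _ _ h2 + some _ _ h1 = some _ _ h3 := by
    have hx : s * (r - 1) * r ≠ (0 : F) := hb0
    rw [add_of_X_ne hx]
    refine tate_aux_some_eq_some _ _ ?_ ?_
    · rw [addX, slope_of_X_ne hx, ha1, ha2]
      field_simp [hb0, hc0, hx4, hx5, hs1', hr0, hr1, hs0, sub_ne_zero]
      try ring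
    · rw [addY, negAddY, addX, negY, slope_of_X_ne hx, ha1, ha2, ha3]
      field_simp [hb0, hc0, hx4, hx5, hs1', hr0, hr1, hs0, sub_ne_zero]
      try ring
  have step4 : some _ _ h3 + some _ _ h1 = some _ _ h4 := by
    have hx : s * (r - 1) ≠ (0 : F) := hc0
    rw [add_of_X_ne hx]
    refine tate_aux_some_eq_some _ _ ?_ ?_
    · rw [addX, slope_of_X_ne hx, ha1, ha2]
      field_simp [hb0, hc0, hx4, hx5, hs1', hr0, hr1, hs0, sub_ne_zero]
      try ring
    · rw [addY, negAddY, addX, negY, slope_of_X_ne hx, ha1, ha2, ha3]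
      field_simp [hb0, hc0, hx4, hx5, hs1', hr0, hr1, hs0, sub_ne_zero]
      try ring
  have step5 : some _ _ h4 + some _ _ h1 = some _ _ h5 := by
    rw [add_of_X_ne hx4]
    refine tate_aux_some_eq_some _ _ ?_ ?_
    · rw [addX, slope_of_X_ne hx4, ha1, ha2]
      field_simp [hb0, hc0, hx4, hx5, hs1', hr0, hr1, hs0, sub_ne_zero]
      try ring
    · rw [addY, negAddY, addX, negY, slope_of_X_ne hx4, ha1, ha2, ha3]
      field_simp [hb0, hc0, hx4, hx5, hs1', hr0, hr1, hs0, sub_ne_zero]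
      try ring
  have step6 : some _ _ h5 + some _ _ h1 = some _ _ h6 := by
    rw [add_of_X_ne hx5]
    refine tate_aux_some_eq_some _ _ ?_ ?_
    · rw [addX, slope_of_X_ne hx5, ha1, ha2]
      field_simp [hb0, hc0, hx4, hx5, hs1', hr0, hr1, hs0, sub_ne_zero]
      try ring
    · rw [addY, negAddY, addX, negY, slope_of_X_ne hx5, ha1, ha2, ha3]
      field_simp [hb0, hc0, hx4, hx5, hs1', hr0, hr1, hs0, sub_ne_zero]
      try ring
  refine ⟨h1, h5, h6, ?_, ?_⟩
  · rw [show (5 : ℤ) = 1 + 1 + 1 + 1 + 1 by norm_num]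
    simp only [add_zsmul, one_zsmul]
    rw [step2, step3, step4, step5]
  · rw [show (6 : ℤ) = 1 + 1 + 1 + 1 + 1 + 1 by norm_num]
    simp only [add_zsmul, one_zsmul]
    rw [step2, step3, step4, step5, step6]
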